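/- Let d_b ≥ d_a ≥ 1 be integers, let Q = (q₀, q₁, q₂) ∈ 𝒬_{d_a}, and let g = gcd(q₀, q₁, q₂). Then for every polynomial h ∈ 𝔽[X] with deg h < d_a + d_b such that g divides h, there exist polynomials ρ₀, ρ₁, ρ₂ ∈ 𝔽[X], each of degree < d_b, with q₀ρ₀ + q₁ρ₁ + q₂ρ₂ = h. (That is, the image of the linear map (ρ₀, ρ₁, ρ₂) ↦ q₀ρ₀ + q₁ρ₁ + q₂ρ₂ on the space of triples of polynomials of degree < d_b is exactly the set of multiples of g of degree < d_a + d_b.) -/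

import Mathlib

open Polynomial

/-- `Qset F d`: triples `(q₀, q₁, q₂)` of polynomials over `F` with `q₀` monic of degree `d`
and `q₁, q₂` of degree `< d`. -/
def Qset (F : Type*) [Field F] (d : ℕ) : Set (F[X] × F[X] × F[X]) :=
  {t | t.1.Monic ∧ t.1.natDegree = d ∧
    t.2.1.degree < (d : WithBot ℕ) ∧ t.2.2.degree < (d : WithBot ℕ)}

theorem stmt_9 (F : Type*) [Field F] [Fintype F] [DecidableEq F]
    (da db : ℕ) (h1 : 1 ≤ da) (h2 : da ≤ db)
    (Q : F[X] × F[X] × F[X]) (hQ : Q ∈ Qset F da)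
    (g : F[X]) (hg : g = gcd Q.1 (gcd Q.2.1 Q.2.2)) :
    ∀ h : F[X], h.degree < ((da + db : ℕ) : WithBot ℕ) → g ∣ h →
      ∃ ρ₀ ρ₁ ρ₂ : F[X],
        ρ₀.degree < (db : WithBot ℕ) ∧ ρ₁.degree < (db : WithBot ℕ) ∧
        ρ₂.degree < (db : WithBot ℕ) ∧
        Q.1 * ρ₀ + Q.2.1 * ρ₁ + Q.2.2 * ρ₂ = h := by
  obtain ⟨q₀, q₁, q₂⟩ := Q
  obtain ⟨hmon, hdeg, hd1, hd2⟩ := hQ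
  dsimp only at hmon hdeg hd1 hd2 hg
  intro h hdh hgdvd
  -- Euclidean gcd divides h
  have hg'dvd : EuclideanDomain.gcd q₀ (EuclideanDomain.gcd q₁ q₂) ∣ h := by
    refine dvd_trans ?_ hgdvd
    rw [hg]
    exact dvd_gcd (EuclideanDomain.gcd_dvd_left _ _)
      (dvd_gcd ((EuclideanDomain.gcd_dvd_right _ _).trans (EuclideanDomain.gcd_dvd_left _ _))
        ((EuclideanDomain.gcd_dvd_right _ _).trans (EuclideanDomain.gcd_dvd_right _ _)))
  obtain ⟨t, ht⟩ := hg'dvd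
  set G : F[X] := EuclideanDomain.gcd q₁ q₂ with hG
  set A : F[X] := EuclideanDomain.gcdA q₀ G with hA
  set B : F[X] := EuclideanDomain.gcdB q₀ G with hB
  set A' : F[X] := EuclideanDomain.gcdA q₁ q₂ with hA'
  set B' : F[X] := EuclideanDomain.gcdB q₁ q₂ with hB'
  have bez1 : EuclideanDomain.gcd q₀ G = q₀ * A + G * B := EuclideanDomain.gcd_eq_gcd_ab q₀ G
  have bez2 : G = q₁ * A' + q₂ * B' := EuclideanDomain.gcd_eq_gcd_ab q₁ q₂
  have key : q₀ * (A * t) + q₁ * (A' * B * t) + q₂ * (B' * B * t) = h := by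
    rw [ht, bez1]
    linear_combination (-(B * t)) * bez2
  have e1 : (A' * B * t) %ₘ q₀ + q₀ * ((A' * B * t) /ₘ q₀) = A' * B * t :=
    modByMonic_add_div _ q₀
  have e2 : (B' * B * t) %ₘ q₀ + q₀ * ((B' * B * t) /ₘ q₀) = B' * B * t :=
    modByMonic_add_div _ q₀
  have hq0deg : q₀.degree = (da : WithBot ℕ) := by
    rw [degree_eq_natDegree hmon.ne_zero, hdeg]
  refine ⟨A * t + q₁ * ((A' * B * t) /ₘ q₀) + q₂ * ((B' * B * t) /ₘ q₀),
    (A' * B * t) %ₘ q₀, (B' * B * t) %ₘ q₀, ?_, ?_, ?_, ?_⟩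
  · -- degree of ρ₀ < db
    set ρ₀ : F[X] := A * t + q₁ * ((A' * B * t) /ₘ q₀) + q₂ * ((B' * B * t) /ₘ q₀) with hρ0
    set ρ₁ : F[X] := (A' * B * t) %ₘ q₀ with hρ1
    set ρ₂ : F[X] := (B' * B * t) %ₘ q₀ with hρ2
    have hρ1d : ρ₁.degree < (da : WithBot ℕ) := by
      rw [← hq0deg]; exact degree_modByMonic_lt _ hmon
    have hρ2d : ρ₂.degree < (da : WithBot ℕ) := by
      rw [← hq0deg]; exact degree_modByMonic_lt _ hmon
    have heq : q₀ * ρ₀ = h - q₁ * ρ₁ - q₂ * ρ₂ := by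
      rw [hρ0]
      linear_combination key + q₁ * e1 + q₂ * e2 - ht + ht
    have hdbne : (db : WithBot ℕ) ≠ ⊥ := by exact_mod_cast WithBot.coe_ne_bot
    have hdadb : (da : WithBot ℕ) ≤ (db : WithBot ℕ) := by exact_mod_cast h2
    have hcast : ((da + db : ℕ) : WithBot ℕ) = (da : WithBot ℕ) + (db : WithBot ℕ) := by
      push_cast; rfl
    have h1' : (q₁ * ρ₁).degree < ((da + db : ℕ) : WithBot ℕ) := by
      rw [hcast]
      refine lt_of_le_of_lt (degree_mul_le _ _) ?_
      by_cases hb : ρ₁.degree = ⊥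
      · rw [hb, WithBot.add_bot, ← hcast]; exact WithBot.bot_lt_coe _
      · exact WithBot.add_lt_add_of_lt_of_le hb hd1 (le_trans hρ1d.le hdadb)
    have h2' : (q₂ * ρ₂).degree < ((da + db : ℕ) : WithBot ℕ) := by
      rw [hcast]
      refine lt_of_le_of_lt (degree_mul_le _ _) ?_
      by_cases hb : ρ₂.degree = ⊥
      · rw [hb, WithBot.add_bot, ← hcast]; exact WithBot.bot_lt_coe _
      · exact WithBot.add_lt_add_of_lt_of_le hb hd2 (le_trans hρ2d.le hdadb)
    have hsum : (q₀ * ρ₀).degree < ((da + db : ℕ) : WithBot ℕ) := by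
      rw [heq]
      calc (h - q₁ * ρ₁ - q₂ * ρ₂).degree
          ≤ max (h - q₁ * ρ₁).degree (q₂ * ρ₂).degree := degree_sub_le _ _
        _ ≤ max (max h.degree (q₁ * ρ₁).degree) (q₂ * ρ₂).degree :=
            max_le_max (degree_sub_le _ _) le_rfl
        _ < _ := by simp only [max_lt_iff]; exact ⟨⟨hdh, h1'⟩, h2'⟩
    rw [degree_mul, hq0deg, hcast] at hsum
    exact (WithBot.add_lt_add_iff_left (by exact_mod_cast WithBot.coe_ne_bot : (da : WithBot ℕ) ≠ ⊥)).mp hsum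
  · refine lt_of_lt_of_le ?_ (by exact_mod_cast h2 : (da : WithBot ℕ) ≤ (db : WithBot ℕ))
    rw [← hq0deg]; exact degree_modByMonic_lt _ hmon
  · refine lt_of_lt_of_le ?_ (by exact_mod_cast h2 : (da : WithBot ℕ) ≤ (db : WithBot ℕ))
    rw [← hq0deg]; exact degree_modByMonic_lt _ hmon
  · dsimp only
    linear_combination key + q₁ * e1 + q₂ * e2
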